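/- For every type T (i.e. every tuple [m_1, ..., m_r] with r ≥ 3, 2 ≤ m_1 ≤ ... ≤ m_r, Θ(T) > 0, α(T) := 4/Θ(T) a positive integer, and m_i ∣ α(T) for all i), one has α(T) ≤ 168. -/

import Mathlib

/-- For a tuple `T = [m₁, ..., m_r]`, `Θ(T) := -2 + ∑ᵢ (1 - 1/mᵢ)` as a rational number. -/
def Theta (T : List ℕ) : ℚ :=
  -2 + (T.map (fun m => 1 - (1 : ℚ) / m)).sum

/-- `T` is a type: `T = [m₁, ..., m_r]` with `r ≥ 3`, `2 ≤ m₁ ≤ ... ≤ m_r`, `Θ(T) > 0`,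
`α(T) = 4/Θ(T)` a positive integer, and `mᵢ ∣ α(T)` for all `i`. -/
def IsType (T : List ℕ) : Prop :=
  3 ≤ T.length ∧ T.Pairwise (· ≤ ·) ∧ (∀ m ∈ T, 2 ≤ m) ∧ 0 < Theta T ∧
    ∃ a : ℕ, 0 < a ∧ (a : ℚ) * Theta T = 4 ∧ ∀ m ∈ T, m ∣ a

lemma inv_le_inv_nat {k m : ℕ} (hk : 0 < k) (h : k ≤ m) : 1/(m:ℚ) ≤ 1/(k:ℚ) := by
  apply one_div_le_one_div_of_le (by exact_mod_cast hk) (by exact_mod_cast h)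

lemma nat_ge_of_inv_lt (n k : ℕ) (hn : 0 < n) (hlt : (1:ℚ)/(n:ℚ) < 1/(k:ℚ)) :
    k + 1 ≤ n := by
  by_contra hc
  push_neg at hc
  have h1 : n ≤ k := by omega
  have := inv_le_inv_nat hn h1
  linarith

lemma Theta_cons (m : ℕ) (l : List ℕ) : Theta (m :: l) = Theta l + (1 - 1/(m:ℚ)) := by
  simp [Theta]; ring

lemma theta_len (l : List ℕ) (h : ∀ m ∈ l, 2 ≤ m) :
    -2 + (l.length : ℚ)/2 ≤ Theta l := by
  induction l with
  | nil => simp [Theta]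
  | cons x xs ih =>
    rw [Theta_cons]
    have hx : 2 ≤ x := h x (by simp)
    have h1 : 1/(x:ℚ) ≤ 1/((2:ℕ):ℚ) := inv_le_inv_nat (by norm_num) hx
    push_cast at h1
    have h2 := ih (fun m hm => h m (by simp [hm]))
    have hc : ((xs.length + 1 : ℕ) : ℚ) = (xs.length : ℚ) + 1 := by push_cast; ring
    simp only [List.length_cons, hc]
    linarith

lemma theta_ge (T : List ℕ) (h3 : 3 ≤ T.length) (hs : T.Pairwise (· ≤ ·))
    (h2 : ∀ m ∈ T, 2 ≤ m) (hpos : 0 < Theta T) : 1/42 ≤ Theta T := by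
  match T, h3 with
  | m1 :: m2 :: m3 :: rest, _ =>
    have hm1 : 2 ≤ m1 := h2 m1 (by simp)
    have hm2 : 2 ≤ m2 := h2 m2 (by simp)
    have hm3 : 2 ≤ m3 := h2 m3 (by simp)
    simp only [List.pairwise_cons] at hs
    have h12 : m1 ≤ m2 := hs.1 m2 (by simp)
    have h23 : m2 ≤ m3 := hs.2.1 m3 (by simp)
    match rest with
    | [] =>
      have hTh : Theta [m1, m2, m3] = 1 - 1/(m1:ℚ) - 1/(m2:ℚ) - 1/(m3:ℚ) := by
        simp [Theta]; ring
      rw [hTh] at hpos ⊢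
      rcases Nat.lt_or_ge m1 4 with h4 | h4
      · interval_cases m1
        · -- m1 = 2
          push_cast at hpos ⊢
          rcases Nat.lt_or_ge m2 6 with h6 | h6
          · interval_cases m2
            · -- m2 = 2 : impossible
              exfalso
              have hp : (0:ℚ) < 1/(m3:ℚ) := by positivity
              push_cast at hpos
              linarith
            · -- m2 = 3 : m3 ≥ 7
              push_cast at hpos ⊢
              have h7 : 7 ≤ m3 := by
                have := nat_ge_of_inv_lt m3 6 (by omega) (by push_cast; linarith)
                omega
              have i3 : (1:ℚ)/(m3:ℚ) ≤ 1/((7:ℕ):ℚ) := inv_le_inv_nat (by norm_num) h7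
              push_cast at i3
              linarith
            · -- m2 = 4 : m3 ≥ 5
              push_cast at hpos ⊢
              have h5 : 5 ≤ m3 := by
                have := nat_ge_of_inv_lt m3 4 (by omega) (by push_cast; linarith)
                omega
              have i3 : (1:ℚ)/(m3:ℚ) ≤ 1/((5:ℕ):ℚ) := inv_le_inv_nat (by norm_num) h5
              push_cast at i3
              linarith
            · -- m2 = 5 : m3 ≥ 5
              push_cast at hpos ⊢
              have i3 : (1:ℚ)/(m3:ℚ) ≤ 1/((5:ℕ):ℚ) := inv_le_inv_nat (by norm_num) h23
              push_cast at i3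
              linarith
          · -- m2 ≥ 6, m3 ≥ 6
            have i2 : (1:ℚ)/(m2:ℚ) ≤ 1/((6:ℕ):ℚ) := inv_le_inv_nat (by norm_num) h6
            have i3 : (1:ℚ)/(m3:ℚ) ≤ 1/((6:ℕ):ℚ) :=
              inv_le_inv_nat (by norm_num) (le_trans h6 h23)
            push_cast at i2 i3
            linarith
        · -- m1 = 3
          push_cast at hpos ⊢
          rcases Nat.lt_or_ge m2 4 with h6 | h6
          · interval_cases m2
            · -- m2 = 3 : m3 ≥ 4
              push_cast at hpos ⊢
              have h4' : 4 ≤ m3 := by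
                have := nat_ge_of_inv_lt m3 3 (by omega) (by push_cast; linarith)
                omega
              have i3 : (1:ℚ)/(m3:ℚ) ≤ 1/((4:ℕ):ℚ) := inv_le_inv_nat (by norm_num) h4'
              push_cast at i3
              linarith
          · -- m2 ≥ 4, m3 ≥ 4
            have i2 : (1:ℚ)/(m2:ℚ) ≤ 1/((4:ℕ):ℚ) := inv_le_inv_nat (by norm_num) h6
            have i3 : (1:ℚ)/(m3:ℚ) ≤ 1/((4:ℕ):ℚ) :=
              inv_le_inv_nat (by norm_num) (le_trans h6 h23)
            push_cast at i2 i3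
            linarith
      · -- m1 ≥ 4
        have i1 : (1:ℚ)/(m1:ℚ) ≤ 1/((4:ℕ):ℚ) := inv_le_inv_nat (by norm_num) h4
        have i2 : (1:ℚ)/(m2:ℚ) ≤ 1/((4:ℕ):ℚ) :=
          inv_le_inv_nat (by norm_num) (le_trans h4 h12)
        have i3 : (1:ℚ)/(m3:ℚ) ≤ 1/((4:ℕ):ℚ) :=
          inv_le_inv_nat (by norm_num) (le_trans h4 (le_trans h12 h23))
        push_cast at i1 i2 i3
        linarith
    | [m4] =>
      have hm4 : 2 ≤ m4 := h2 m4 (by simp)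
      have h34 : m3 ≤ m4 := hs.2.2.1 m4 (by simp)
      have hTh : Theta [m1, m2, m3, m4] =
          2 - 1/(m1:ℚ) - 1/(m2:ℚ) - 1/(m3:ℚ) - 1/(m4:ℚ) := by
        simp [Theta]; ring
      rw [hTh] at hpos ⊢
      rcases Nat.lt_or_ge m4 3 with h4 | h4
      · exfalso
        have e4 : m4 = 2 := by omega
        have e3 : m3 = 2 := by omega
        have e2 : m2 = 2 := by omega
        have e1 : m1 = 2 := by omega
        rw [e1, e2, e3, e4] at hpos
        norm_num at hpos
      · have i4 : (1:ℚ)/(m4:ℚ) ≤ 1/((3:ℕ):ℚ) := inv_le_inv_nat (by norm_num) h4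
        have i1 : (1:ℚ)/(m1:ℚ) ≤ 1/((2:ℕ):ℚ) := inv_le_inv_nat (by norm_num) hm1
        have i2 : (1:ℚ)/(m2:ℚ) ≤ 1/((2:ℕ):ℚ) := inv_le_inv_nat (by norm_num) hm2
        have i3 : (1:ℚ)/(m3:ℚ) ≤ 1/((2:ℕ):ℚ) := inv_le_inv_nat (by norm_num) hm3
        push_cast at i1 i2 i3 i4
        linarith
    | m4 :: m5 :: rest2 =>
      have hlb := theta_len (m1 :: m2 :: m3 :: m4 :: m5 :: rest2) h2
      have hlen : (5:ℚ) ≤ ((m1 :: m2 :: m3 :: m4 :: m5 :: rest2).length : ℚ) := by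
        simp only [List.length_cons]
        push_cast
        have : (0:ℚ) ≤ (rest2.length : ℚ) := by positivity
        linarith
      linarith

/-- For every type `T`, its `α`-value (the positive integer `a` with `a · Θ(T) = 4`,
i.e. `a = 4/Θ(T)`) satisfies `α(T) ≤ 168`. -/
theorem alpha_le_168_of_isType (T : List ℕ) (hT : IsType T)
    (a : ℕ) (ha : (a : ℚ) * Theta T = 4) :
    a ≤ 168 := by
  obtain ⟨h3, hs, h2, hpos, -⟩ := hT
  have hge := theta_ge T h3 hs h2 hpos
  have hapos : (0:ℚ) ≤ (a:ℚ) := by positivity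
  have h1 : (a:ℚ) * (1/42) ≤ (a:ℚ) * Theta T := mul_le_mul_of_nonneg_left hge hapos
  rw [ha] at h1
  have : (a:ℚ) ≤ 168 := by linarith
  exact_mod_cast this
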